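/- For every n ≥ 1 and all x_1, …, x_n ∈ {0,1} (viewed as integers), ∏_{i=1}^n x_i = max_{w ∈ {0,1}} w·( (∑_{i=1}^n x_i) − (n − 1) ). -/

import Mathlib

/-- General-order Ishikawa identity: for `n ≥ 1` and Boolean `x₁, …, xₙ` (as integers),
`∏ᵢ xᵢ = max_{w ∈ {0,1}} w·((∑ᵢ xᵢ) − (n − 1))`. -/
theorem ishikawa_general_order (n : ℕ) (hn : 1 ≤ n) (x : Fin n → ℤ)
    (hx : ∀ i, x i = 0 ∨ x i = 1) :
    ∏ i, x i =
      ({0, 1} : Finset ℤ).sup' (Finset.insert_nonempty 0 {1})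
        (fun w => w * ((∑ i, x i) - ((n : ℤ) - 1))) := by
  rw [Finset.sup'_insert,
    Finset.sup'_singleton]
  simp only [zero_mul, one_mul]
  by_cases h : ∀ i, x i = 1
  · have hp : ∏ i, x i = 1 := Finset.prod_eq_one fun i _ => h i
    have hs : ∑ i, x i = (n : ℤ) := by
      rw [Finset.sum_congr rfl fun i _ => h i]; simp
    rw [hp, hs]
    have : (1 : ℤ) ≤ (n : ℤ) := by exact_mod_cast hn
    omega
  · push_neg at h
    obtain ⟨j, hj⟩ := h
    have hj0 : x j = 0 := (hx j).resolve_right hj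
    have hp : ∏ i, x i = 0 := Finset.prod_eq_zero (Finset.mem_univ j) hj0
    have hs : ∑ i, x i ≤ (n : ℤ) - 1 := by
      calc ∑ i, x i = ∑ i ∈ Finset.univ.erase j, x i := by
            rw [← Finset.add_sum_erase _ _ (Finset.mem_univ j), hj0, zero_add]
        _ ≤ ∑ _i ∈ Finset.univ.erase j, (1 : ℤ) :=
            Finset.sum_le_sum fun i _ => by rcases hx i with h | h <;> omega
        _ = (n : ℤ) - 1 := by
            simp [Finset.card_erase_of_mem]; omega
    rw [hp]
    omega
  exact Finset.singleton_nonempty 1
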